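/- The normalized sup distance d∞(x,y) := ‖x−y‖∞ / max{‖x‖∞, ‖y‖∞} on ℝᵏ (with d∞(0,0) := 0) satisfies the k-relaxed triangle inequality: for all x, y, z ∈ ℝᵏ, d∞(x,y) ≤ k·(d∞(x,z) + d∞(z,y)). -/

import Mathlib

/-- The normalized absolute-value distance on `ℝ` satisfies the (unrelaxed)
triangle inequality. -/
lemma scalar_rel (x y z : ℝ) :
    |x - y| / max |x| |y| ≤ |x - z| / max |x| |z| + |z - y| / max |z| |y| := by
  wlog hxy : |y| ≤ |x| with H
  · have h := H y x z (le_of_not_ge hxy)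
    rw [abs_sub_comm y x, max_comm |y| |x|, abs_sub_comm y z, max_comm |y| |z|,
      abs_sub_comm z x, max_comm |z| |x|] at h
    linarith
  wlog hz : 0 ≤ z with H2
  · have h := H2 (-x) (-y) (-z) (by simpa using hxy) (by push_neg at hz; linarith)
    simp only [neg_sub_neg, abs_neg] at h
    rw [abs_sub_comm y x, abs_sub_comm z x, abs_sub_comm y z] at h
    linarith
  rcases le_total |z| |x| with hzx | hxz
  · rw [max_eq_left hxy, max_eq_left hzx]
    rcases eq_or_lt_of_le (abs_nonneg x) with h0 | h0
    · have hx0 : x = 0 := abs_eq_zero.mp h0.symm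
      have hy0 : y = 0 := abs_eq_zero.mp (le_antisymm (h0 ▸ hxy) (abs_nonneg y))
      have hz0 : z = 0 := abs_eq_zero.mp (le_antisymm (h0 ▸ hzx) (abs_nonneg z))
      simp [hx0, hy0, hz0]
    · by_cases hzy0 : max |z| |y| = 0
      · have hz0 : z = 0 := abs_eq_zero.mp (le_antisymm (hzy0 ▸ le_max_left _ _) (abs_nonneg z))
        have hy0 : y = 0 := abs_eq_zero.mp (le_antisymm (hzy0 ▸ le_max_right _ _) (abs_nonneg y))
        simp [hz0, hy0]
      · have hzy : 0 < max |z| |y| := lt_of_le_of_ne (by positivity) (Ne.symm hzy0)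
        have h2 : |z - y| / |x| ≤ |z - y| / max |z| |y| :=
          div_le_div_of_nonneg_left (abs_nonneg _) hzy (max_le hzx hxy)
        have h3 : |x - y| ≤ |x - z| + |z - y| := abs_sub_le x z y
        have h4 : |x - y| / |x| ≤ (|x - z| + |z - y|) / |x| :=
          div_le_div_of_nonneg_right h3 h0.le
        rw [add_div] at h4
        linarith
  · have hyz : |y| ≤ |z| := hxy.trans hxz
    rw [max_eq_left hxy, max_eq_right hxz, max_eq_left hyz]
    rcases eq_or_lt_of_le (abs_nonneg x) with h0 | h0
    · have hx0 : x = 0 := abs_eq_zero.mp h0.symm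
      have hy0 : y = 0 := abs_eq_zero.mp (le_antisymm (h0 ▸ hxy) (abs_nonneg y))
      rw [hx0, hy0]
      simp only [sub_zero, zero_sub, sub_self, abs_zero, zero_div]
      positivity
    · have hzpos : 0 < |z| := lt_of_lt_of_le h0 hxz
      have hzz : |z| = z := abs_of_nonneg hz
      have hxlez : x ≤ z := le_trans (le_abs_self x) (hzz ▸ hxz)
      have hylez : y ≤ z := le_trans (le_abs_self y) (hzz ▸ hyz)
      rw [hzz] at hzpos ⊢
      rw [show |x - z| = z - x by rw [abs_sub_comm]; exact abs_of_nonneg (by linarith),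
        show |z - y| = z - y from abs_of_nonneg (by linarith), ← add_div,
        div_le_div_iff₀ h0 hzpos]
      have hxz' : |x| ≤ z := hzz ▸ hxz
      rcases abs_cases (x - y) with ⟨he, _⟩ | ⟨he, _⟩ <;>
        rw [he] <;>
        nlinarith [le_abs_self x, neg_abs_le x, le_abs_self y, neg_abs_le y, abs_nonneg x,
          mul_nonneg (sub_nonneg.2 hxz') (show (0:ℝ) ≤ 2 * |x| - x + y by
            nlinarith [le_abs_self x, neg_abs_le y]),
          mul_nonneg (sub_nonneg.2 hxz') (show (0:ℝ) ≤ 2 * |x| + x - y by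
            nlinarith [neg_abs_le x, le_abs_self y]),
          mul_nonneg (abs_nonneg x) (show (0:ℝ) ≤ |x| - x by linarith [le_abs_self x]),
          mul_nonneg (abs_nonneg x) (show (0:ℝ) ≤ |x| - y by linarith [le_abs_self y])]

/-- The normalized distance in any normed group satisfies the 2-relaxed
triangle inequality. -/
lemma two_rel {E : Type*} [NormedAddCommGroup E] (x y z : E) :
    ‖x - y‖ / max ‖x‖ ‖y‖ ≤
      2 * (‖x - z‖ / max ‖x‖ ‖z‖ + ‖z - y‖ / max ‖z‖ ‖y‖) := by
  wlog hxy : ‖y‖ ≤ ‖x‖ with H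
  · have h := H y x z (le_of_not_ge hxy)
    rw [norm_sub_rev y x, max_comm ‖y‖ ‖x‖, norm_sub_rev y z, max_comm ‖y‖ ‖z‖,
      norm_sub_rev z x, max_comm ‖z‖ ‖x‖] at h
    linarith
  have htri : ‖x - y‖ ≤ ‖x - z‖ + ‖z - y‖ := by
    have := norm_add_le (x - z) (z - y)
    rwa [sub_add_sub_cancel] at this
  rcases le_total ‖z‖ ‖x‖ with hzx | hxz
  · rw [max_eq_left hxy, max_eq_left hzx]
    rcases eq_or_lt_of_le (norm_nonneg x) with h0 | h0
    · have hx0 : x = 0 := norm_eq_zero.mp h0.symm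
      have hy0 : y = 0 := norm_eq_zero.mp (le_antisymm (h0 ▸ hxy) (norm_nonneg y))
      have hz0 : z = 0 := norm_eq_zero.mp (le_antisymm (h0 ▸ hzx) (norm_nonneg z))
      simp [hx0, hy0, hz0]
    · by_cases hzy0 : max ‖z‖ ‖y‖ = 0
      · have hz0 : z = 0 := norm_eq_zero.mp (le_antisymm (hzy0 ▸ le_max_left _ _) (norm_nonneg z))
        have hy0 : y = 0 := norm_eq_zero.mp (le_antisymm (hzy0 ▸ le_max_right _ _) (norm_nonneg y))
        rw [hz0, hy0]
        simp only [sub_zero, sub_self, norm_zero, zero_div, add_zero]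
        have : (0:ℝ) ≤ ‖x‖ / ‖x‖ := by positivity
        linarith
      · have hzy : 0 < max ‖z‖ ‖y‖ := lt_of_le_of_ne (by positivity) (Ne.symm hzy0)
        have h2 : ‖z - y‖ / ‖x‖ ≤ ‖z - y‖ / max ‖z‖ ‖y‖ :=
          div_le_div_of_nonneg_left (norm_nonneg _) hzy (max_le hzx hxy)
        have h4 : ‖x - y‖ / ‖x‖ ≤ (‖x - z‖ + ‖z - y‖) / ‖x‖ :=
          div_le_div_of_nonneg_right htri h0.le
        rw [add_div] at h4
        have h5 : (0:ℝ) ≤ ‖x - z‖ / ‖x‖ := by positivity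
        have h6 : (0:ℝ) ≤ ‖z - y‖ / max ‖z‖ ‖y‖ := by positivity
        linarith
  · have hyz : ‖y‖ ≤ ‖z‖ := hxy.trans hxz
    rw [max_eq_left hxy, max_eq_right hxz, max_eq_left hyz]
    rcases eq_or_lt_of_le (norm_nonneg x) with h0 | h0
    · have hx0 : x = 0 := norm_eq_zero.mp h0.symm
      have hy0 : y = 0 := norm_eq_zero.mp (le_antisymm (h0 ▸ hxy) (norm_nonneg y))
      rw [hx0, hy0]
      simp only [sub_zero, zero_sub, sub_self, norm_zero, zero_div]
      positivity
    · have hzpos : 0 < ‖z‖ := lt_of_lt_of_le h0 hxz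
      have hq : ‖z‖ - ‖x‖ ≤ ‖x - z‖ := by
        rw [norm_sub_rev]; exact le_trans (le_abs_self _) (abs_norm_sub_norm_le z x)
      have hr : ‖z‖ - ‖y‖ ≤ ‖z - y‖ := le_trans (le_abs_self _) (abs_norm_sub_norm_le z y)
      have hp2 : ‖x - y‖ ≤ ‖x‖ + ‖y‖ := norm_sub_le x y
      rw [← add_div, ← mul_div_assoc, div_le_div_iff₀ h0 hzpos]
      rcases le_total ‖z‖ (2 * ‖x‖) with h | h
      · nlinarith [norm_nonneg (x - y), norm_nonneg x]
      · nlinarith [norm_nonneg x, norm_nonneg y, norm_nonneg (x - y)]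

lemma norm_fin_one (w : Fin 1 → ℝ) : ‖w‖ = |w 0| := by
  have hw : w = fun _ => w 0 := funext fun i => by
    have : i = 0 := Subsingleton.elim i 0
    rw [this]
  rw [hw, pi_norm_const]
  exact Real.norm_eq_abs _

/-- The normalized sup distance `d∞(x,y) = ‖x−y‖∞ / max{‖x‖∞,‖y‖∞}` on `ℝᵏ`
(with `d∞(0,0) = 0` via the `0/0 = 0` convention; the norm on `Fin k → ℝ` is the
sup norm) satisfies the `k`-relaxed triangle inequality. -/
theorem stmt3 (k : ℕ) (x y z : Fin k → ℝ) :
    ‖x - y‖ / max ‖x‖ ‖y‖ ≤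
      (k : ℝ) * (‖x - z‖ / max ‖x‖ ‖z‖ + ‖z - y‖ / max ‖z‖ ‖y‖) := by
  match k with
  | 0 =>
    have hx : x = 0 := Subsingleton.elim _ _
    have hy : y = 0 := Subsingleton.elim _ _
    have hz : z = 0 := Subsingleton.elim _ _
    simp only [hx, hy, hz, sub_self, norm_zero, Nat.cast_zero, zero_mul, max_self, zero_div,
      le_refl]
  | 1 =>
    simp only [norm_fin_one, Pi.sub_apply, Nat.cast_one, one_mul]
    exact scalar_rel (x 0) (y 0) (z 0)
  | (n + 2) =>
    have hS : (0:ℝ) ≤ ‖x - z‖ / max ‖x‖ ‖z‖ + ‖z - y‖ / max ‖z‖ ‖y‖ := by positivity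
    have h2 : (2:ℝ) ≤ ((n + 2 : ℕ) : ℝ) := by push_cast; linarith
    calc ‖x - y‖ / max ‖x‖ ‖y‖ ≤ 2 * (‖x - z‖ / max ‖x‖ ‖z‖ + ‖z - y‖ / max ‖z‖ ‖y‖) :=
          two_rel x y z
      _ ≤ ((n + 2 : ℕ) : ℝ) * (‖x - z‖ / max ‖x‖ ‖z‖ + ‖z - y‖ / max ‖z‖ ‖y‖) :=
          mul_le_mul_of_nonneg_right h2 hS
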